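/- arXiv:2510.01333 — 2 statements merged into one kernel-verified Lean document; each statement's English description precedes it below -/
import Mathlib

section
/- Let A_1, …, A_g be orthogonal projections on a finite-dimensional Hilbert space, and let ψ be a unit vector such that ‖A_g ⋯ A_2 A_1 ψ‖² ≤ 1 − ε for some ε ∈ [0,1]. Then there exists some index χ ∈ [g] with ‖A_χ ψ‖² ≤ 1 − ε/(4g). -/
open Finset Matrix
open scoped ComplexInnerProductSpace

private lemma cdl_arith (ε D2 S E' t : ℝ) (hε1 : ε ≤ 1) (hDε : ε ≤ D2)
    (hD2le1 : D2 ≤ 1) (hS0 : 0 ≤ S) (hE'0 : 0 ≤ E') (hCS : S ^ 2 ≤ E' * D2)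
    (ht0 : 0 ≤ t) (ht2 : t ^ 2 = 1 - D2) (hSt : 1 - S ≤ t)
    (hE' : E' < ε / 4) (hεpos : 0 < ε) : False := by
  have hD2pos : 0 < D2 := lt_of_lt_of_le hεpos hDε
  by_cases hS1 : S < 1
  · have h1 : (1 - S) ^ 2 ≤ t ^ 2 := pow_le_pow_left₀ (by linarith) hSt 2
    rw [ht2] at h1
    have hD2le : D2 ≤ 2 * S - S ^ 2 := by nlinarith
    have hSD : S ^ 2 < (ε / 4) * D2 := by nlinarith
    nlinarith
  · push_neg at hS1
    have : (1:ℝ) ≤ S ^ 2 := by nlinarith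
    nlinarith


/-- Converse to the detectability lemma: if `A_1, …, A_g` are orthogonal
projections and `‖A_g ⋯ A_1 ψ‖² ≤ 1 − ε` for a unit vector `ψ`, then some
`A_χ` satisfies `‖A_χ ψ‖² ≤ 1 − ε/(4g)`. -/
theorem converse_detectability_lemma
    {g : ℕ} (hg : 0 < g) {V : Type*} [Fintype V] [DecidableEq V]
    (A : Fin g → Matrix V V ℂ)
    (hherm : ∀ χ, (A χ).IsHermitian) (hidem : ∀ χ, A χ * A χ = A χ)
    (ψ : V → ℂ) (hψ : ∑ i, Complex.normSq (ψ i) = 1)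
    (ε : ℝ) (hε : ε ∈ Set.Icc (0:ℝ) 1)
    (hprod : ∑ i, Complex.normSq (((List.ofFn A).reverse.prod).mulVec ψ i) ≤ 1 - ε) :
    ∃ χ : Fin g, ∑ i, Complex.normSq ((A χ).mulVec ψ i) ≤ 1 - ε / (4 * g) := by
  classical
  by_contra hcon
  push_neg at hcon
  -- move to EuclideanSpace
  have hnorm : ∀ v : V → ℂ,
      ‖((WithLp.equiv 2 (V → ℂ)).symm v : EuclideanSpace ℂ V)‖^2
        = ∑ i, Complex.normSq (v i) := by
    intro v
    rw [EuclideanSpace.norm_eq, Real.sq_sqrt (by positivity)]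
    simp
    simp only [Complex.sq_norm]
  set ψE : EuclideanSpace ℂ V := (WithLp.equiv 2 (V → ℂ)).symm ψ with hψE
  set f : Fin g → EuclideanSpace ℂ V →ₗ[ℂ] EuclideanSpace ℂ V :=
    fun χ => Matrix.toEuclideanLin (A χ) with hf
  have hsym : ∀ χ, (f χ).IsSymmetric :=
    fun χ => Matrix.isHermitian_iff_isSymmetric.mp (hherm χ)
  have hid : ∀ χ (x : EuclideanSpace ℂ V), f χ (f χ x) = f χ x := by
    intro χ x
    have : f χ (f χ x) = Matrix.toEuclideanLin (A χ * A χ) x := by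
      simp [hf, Matrix.toEuclideanLin_apply, Matrix.mulVec_mulVec]
    rw [this, hidem]
  have hψn : ‖ψE‖ = 1 := by
    rw [← Real.sqrt_sq (norm_nonneg ψE), hnorm ψ, hψ, Real.sqrt_one]
  have hψn2 : ‖ψE‖^2 = 1 := by rw [hψn]; norm_num
  -- the walk
  set φ : ℕ → EuclideanSpace ℂ V :=
    fun m => Nat.rec ψE (fun k v => if h : k < g then f ⟨k, h⟩ v else v) m with hφ
  have hφ0 : φ 0 = ψE := rfl
  have hφs : ∀ k, φ (k+1) = if h : k < g then f ⟨k, h⟩ (φ k) else φ k := fun k => rfl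
  -- φ g is the product vector
  have hφg : ∀ m, m ≤ g →
      φ m = (WithLp.equiv 2 (V → ℂ)).symm ((((List.ofFn A).take m).reverse.prod).mulVec ψ) := by
    intro m
    induction m with
    | zero => intro _; simp [hφ0, hψE]
    | succ m ih =>
      intro hm
      have hmg : m < g := hm
      have htake : (List.ofFn A).take (m+1) = (List.ofFn A).take m ++ [A ⟨m, hmg⟩] := by
        rw [List.take_succ]
        congr 1
        rw [List.getElem?_ofFn]
        simp [List.ofFnNthVal, hmg]
      rw [hφs m, dif_pos hmg, ih (le_of_lt hmg), htake]
      simp [hf, Matrix.toEuclideanLin_apply, Matrix.mulVec_mulVec, List.prod_append]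
  have hφgg : φ g = (WithLp.equiv 2 (V → ℂ)).symm (((List.ofFn A).reverse.prod).mulVec ψ) := by
    rw [hφg g le_rfl, List.take_of_length_le (by simp)]
  -- Pythagoras for projections
  have pyth : ∀ χ (x : EuclideanSpace ℂ V), ‖x‖^2 = ‖f χ x‖^2 + ‖x - f χ x‖^2 := by
    intro χ x
    have h0 : ⟪f χ x, x - f χ x⟫ = 0 := by
      rw [hsym χ, map_sub, hid χ x, sub_self, inner_zero_right]
    have hx : f χ x + (x - f χ x) = x := by abel
    calc ‖x‖^2 = ‖f χ x + (x - f χ x)‖^2 := by rw [hx]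
      _ = ‖f χ x‖^2 + 2 * RCLike.re ⟪f χ x, x - f χ x⟫ + ‖x - f χ x‖^2 :=
        norm_add_sq _ _
      _ = ‖f χ x‖^2 + ‖x - f χ x‖^2 := by rw [h0]; simp
  -- step quantities
  set d : ℕ → ℝ := fun k => ‖φ k - φ (k+1)‖ with hd
  set e : ℕ → ℝ := fun k => if h : k < g then ‖ψE - f ⟨k, h⟩ ψE‖ else 0 with he
  have hd0 : ∀ k, 0 ≤ d k := fun k => norm_nonneg _
  have he0 : ∀ k, 0 ≤ e k := by
    intro k; rw [he]; dsimp only; split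
    · exact norm_nonneg _
    · exact le_refl 0
  -- H1 : norm decomposition
  have H1 : ∀ m, ‖φ m‖^2 + ∑ k ∈ range m, d k ^ 2 = 1 := by
    intro m
    induction m with
    | zero => simpa [hφ0] using hψn2
    | succ m ih =>
      rw [Finset.sum_range_succ]
      by_cases h : m < g
      · have hstep : φ (m+1) = f ⟨m, h⟩ (φ m) := by rw [hφs m, dif_pos h]
        have := pyth ⟨m, h⟩ (φ m)
        rw [← hstep] at this
        have hdm : d m ^ 2 = ‖φ m - φ (m+1)‖^2 := by rw [hd]
        linarith [ih, this, hdm.ge, hdm.le]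
      · have hstep : φ (m+1) = φ m := by rw [hφs m, dif_neg h]
        have hdm : d m = 0 := by rw [hd]; simp [hstep]
        rw [hstep, hdm]
        simpa using ih
  -- H2 : overlap lower bound
  have H2 : ∀ m, 1 - ∑ k ∈ range m, e k * d k ≤ RCLike.re ⟪ψE, φ m⟫ := by
    intro m
    induction m with
    | zero =>
      simp only [hφ0, Finset.range_zero, Finset.sum_empty, sub_zero]
      rw [inner_self_eq_norm_sq, hψn2]
    | succ m ih =>
      rw [Finset.sum_range_succ]
      by_cases h : m < g
      · have hstep : φ (m+1) = f ⟨m, h⟩ (φ m) := by rw [hφs m, dif_pos h]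
        set χ : Fin g := ⟨m, h⟩
        have key : ⟪ψE, φ m - f χ (φ m)⟫ = ⟪ψE - f χ ψE, φ m - f χ (φ m)⟫ := by
          rw [inner_sub_left]
          have : ⟪f χ ψE, φ m - f χ (φ m)⟫ = 0 := by
            rw [hsym χ, map_sub, hid χ (φ m), sub_self, inner_zero_right]
          rw [this, sub_zero]
        have hsplit : RCLike.re ⟪ψE, φ (m+1)⟫
            = RCLike.re ⟪ψE, φ m⟫ - RCLike.re ⟪ψE, φ m - f χ (φ m)⟫ := by
          rw [hstep]
          have : (⟪ψE, f χ (φ m)⟫) = ⟪ψE, φ m⟫ - ⟪ψE, φ m - f χ (φ m)⟫ := by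
            rw [inner_sub_right]; ring
          rw [this, map_sub]
        have hcs : RCLike.re ⟪ψE, φ m - f χ (φ m)⟫ ≤ e m * d m := by
          rw [key]
          calc RCLike.re ⟪ψE - f χ ψE, φ m - f χ (φ m)⟫
              ≤ ‖ψE - f χ ψE‖ * ‖φ m - f χ (φ m)‖ := re_inner_le_norm _ _
            _ = e m * d m := by rw [he, hd]; simp only; rw [dif_pos h, hstep]
        rw [hsplit] at *
        linarith [ih, hcs]
      · have hstep : φ (m+1) = φ m := by rw [hφs m, dif_neg h]
        have hem : e m = 0 := by rw [he]; simp [h]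
        rw [hstep, hem]
        simpa using ih
  -- assemble
  set D2 : ℝ := ∑ k ∈ range g, d k ^ 2 with hD2def
  set S : ℝ := ∑ k ∈ range g, e k * d k with hSdef
  set E' : ℝ := ∑ k ∈ range g, e k ^ 2 with hE'def
  have hφg2 : ‖φ g‖^2 ≤ 1 - ε := by rw [hφgg, hnorm]; exact hprod
  have hD2 : ‖φ g‖^2 = 1 - D2 := by have := H1 g; linarith
  have hDε : ε ≤ D2 := by linarith
  have hD2le1 : D2 ≤ 1 := by nlinarith [sq_nonneg ‖φ g‖]
  have hS0 : 0 ≤ S := Finset.sum_nonneg fun k _ => mul_nonneg (he0 k) (hd0 k)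
  have hE'0 : 0 ≤ E' := Finset.sum_nonneg fun k _ => sq_nonneg _
  have hCS : S ^ 2 ≤ E' * D2 := Finset.sum_mul_sq_le_sq_mul_sq (range g) e d
  have hSt : 1 - S ≤ ‖φ g‖ := by
    have h2 := H2 g
    have h3 : RCLike.re ⟪ψE, φ g⟫ ≤ ‖ψE‖ * ‖φ g‖ := re_inner_le_norm _ _
    rw [hψn, one_mul] at h3
    linarith
  -- each e k ^ 2 < ε / (4g)
  have heach : ∀ k ∈ range g, e k ^ 2 < ε / (4 * g) := by
    intro k hk
    have hkg : k < g := Finset.mem_range.mp hk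
    set χ : Fin g := ⟨k, hkg⟩
    have hn : ‖f χ ψE‖^2 = ∑ i, Complex.normSq ((A χ).mulVec ψ i) := by
      rw [hf]; simp only
      rw [show Matrix.toEuclideanLin (A χ) ψE
          = (WithLp.equiv 2 (V → ℂ)).symm ((A χ).mulVec ψ) from rfl, hnorm]
    have hc := hcon χ
    rw [← hn] at hc
    have hp := pyth χ ψE
    have : e k ^ 2 = ‖ψE - f χ ψE‖^2 := by rw [he]; simp only; rw [dif_pos hkg]
    rw [this]
    linarith [hp, hψn2, hc]
  have hE' : E' < ε / 4 := by
    have := Finset.sum_lt_sum_of_nonempty (Finset.nonempty_range_iff.mpr hg.ne')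
      heach
    rw [Finset.sum_const, Finset.card_range, nsmul_eq_mul] at this
    have hgpos : (0:ℝ) < g := Nat.cast_pos.mpr hg
    calc E' < g * (ε / (4 * g)) := this
      _ = ε / 4 := by field_simp
  have hεpos : 0 < ε := by linarith
  have ht0 : 0 ≤ ‖φ g‖ := norm_nonneg _
  have ht2 : ‖φ g‖ ^ 2 = 1 - D2 := hD2
  exact cdl_arith ε D2 S E' ‖φ g‖ hε.2 hDε hD2le1 hS0 hE'0 hCS ht0 ht2 hSt hE' hεpos
end

section
/- Let Z_1, …, Z_{n+k} be (arbitrarily correlated) {0,1}-valued random variables, and let S be a uniformly random subset of [n+k] of size k, independent of the Z_i. Then for any δ, ν ∈ [0,1], the probability that Σ_{i∈S} Z_i ≤ k·δ and simultaneously Σ_{i∉S} Z_i ≥ n·(δ+ν) is at most exp(−2ν²nk²/((n+k)(k+1))). -/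
open MeasureTheory Finset

private lemma bernoulli_mgf (q : ℝ) (hq0 : 0 ≤ q) (hq1 : q ≤ 1) (t : ℝ) :
    1 - q + q * Real.exp t ≤ Real.exp (q * t + t ^ 2 / 8) := by
  have hden : ∀ s : ℝ, 0 < 1 - q + q * Real.exp s := by
    intro s
    rcases eq_or_lt_of_le hq0 with h | h
    · simp [← h]
    · nlinarith [Real.exp_pos s]
  set f' : ℝ → ℝ := fun s => q + s / 4 - q * Real.exp s / (1 - q + q * Real.exp s) with hf'def
  set f : ℝ → ℝ := fun s => q * s + s ^ 2 / 8 - Real.log (1 - q + q * Real.exp s) with hfdef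
  have hden' : ∀ s : ℝ, HasDerivAt (fun s : ℝ => 1 - q + q * Real.exp s) (q * Real.exp s) s := by
    intro s
    simpa using ((Real.hasDerivAt_exp s).const_mul q).const_add (1 - q)
  have hderiv : ∀ s, HasDerivAt f (f' s) s := by
    intro s
    have h2 : HasDerivAt (fun s : ℝ => Real.log (1 - q + q * Real.exp s))
        (q * Real.exp s / (1 - q + q * Real.exp s)) s := (hden' s).log (hden s).ne'
    have h3 : HasDerivAt (fun s : ℝ => q * s + s ^ 2 / 8) (q + s / 4) s := by
      have := ((hasDerivAt_pow 2 s).div_const 8).const_add 0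
      have h4 : HasDerivAt (fun s : ℝ => q * s) q s := by
        simpa using (hasDerivAt_id s).const_mul q
      have h5 := h4.add ((hasDerivAt_pow 2 s).div_const 8)
      exact h5.congr_deriv (by push_cast; ring)
    exact h3.sub h2
  have hderiv' : ∀ s, HasDerivAt f'
      (1 / 4 - q * Real.exp s * (1 - q) / (1 - q + q * Real.exp s) ^ 2) s := by
    intro s
    have hu : HasDerivAt (fun s : ℝ => q * Real.exp s) (q * Real.exp s) s :=
      (Real.hasDerivAt_exp s).const_mul q
    have hdiv : HasDerivAt (fun s : ℝ => q * Real.exp s / (1 - q + q * Real.exp s))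
        ((q * Real.exp s * (1 - q + q * Real.exp s) - q * Real.exp s * (q * Real.exp s)) /
          (1 - q + q * Real.exp s) ^ 2) s := hu.div (hden' s) (hden s).ne'
    have hlin : HasDerivAt (fun s : ℝ => q + s / 4) (1 / 4) s := by
      simpa using ((hasDerivAt_id s).div_const 4).const_add q
    have := hlin.sub hdiv
    exact this.congr_deriv (by ring)
  have hquart : ∀ s : ℝ, q * Real.exp s * (1 - q) / (1 - q + q * Real.exp s) ^ 2 ≤ 1 / 4 := by
    intro s
    rw [div_le_iff₀ (by have := hden s; positivity)]
    nlinarith [sq_nonneg (1 - q - q * Real.exp s)]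
  have hmono : Monotone f' := by
    refine monotone_of_deriv_nonneg (fun s => (hderiv' s).differentiableAt) (fun s => ?_)
    rw [(hderiv' s).deriv]
    linarith [hquart s]
  have hf'0 : f' 0 = 0 := by simp [hf'def]
  have hf0 : f 0 = 0 := by simp [hfdef]
  have hft : 0 ≤ f t := by
    rcases le_total 0 t with ht | ht
    · have : MonotoneOn f (Set.Ici 0) := by
        refine monotoneOn_of_deriv_nonneg (convex_Ici 0)
          (fun s _ => (hderiv s).differentiableAt.continuousAt.continuousWithinAt)
          (fun s _ => (hderiv s).differentiableAt.differentiableWithinAt) (fun s hs => ?_)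
        rw [(hderiv s).deriv, ← hf'0]
        exact hmono (le_of_lt (by simpa using hs))
      have := this (Set.self_mem_Ici) (Set.mem_Ici.2 ht) ht
      linarith [hf0 ▸ this]
    · have : AntitoneOn f (Set.Iic 0) := by
        refine antitoneOn_of_deriv_nonpos (convex_Iic 0)
          (fun s _ => (hderiv s).differentiableAt.continuousAt.continuousWithinAt)
          (fun s _ => (hderiv s).differentiableAt.differentiableWithinAt) (fun s hs => ?_)
        rw [(hderiv s).deriv, ← hf'0]
        exact hmono (le_of_lt (by simpa using hs))
      have := this (Set.mem_Iic.2 ht) (Set.self_mem_Iic) ht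
      linarith [hf0 ▸ this]
  have : Real.log (1 - q + q * Real.exp t) ≤ q * t + t ^ 2 / 8 := by
    have := hft
    simp only [hfdef] at this
    linarith
  exact (Real.log_le_iff_le_exp (hden t)).1 this

private lemma sum_powersetCard_succ {α : Type*} [DecidableEq α] [Fintype α] (j : ℕ)
    (F : Finset α → ℝ) :
    (j + 1 : ℝ) * ∑ A ∈ powersetCard (j + 1) (univ : Finset α), F A =
      ∑ B ∈ powersetCard j (univ : Finset α), ∑ x ∈ Bᶜ, F (insert x B) := by
  have h1 : ∀ A ∈ powersetCard (j + 1) (univ : Finset α), (j + 1 : ℝ) * F A = ∑ _x ∈ A, F A := by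
    intro A hA
    rw [Finset.sum_const, (Finset.mem_powersetCard.1 hA).2]
    simp [nsmul_eq_mul]
  rw [Finset.mul_sum, Finset.sum_congr rfl h1]
  rw [Finset.sum_sigma' (powersetCard (j + 1) (univ : Finset α)) (fun A => A) (fun A _x => F A),
    Finset.sum_sigma' (powersetCard j (univ : Finset α)) (fun B => Bᶜ)
      (fun B x => F (insert x B))]
  refine Finset.sum_nbij' (fun p => ⟨p.1.erase p.2, p.2⟩) (fun p => ⟨insert p.2 p.1, p.2⟩)
    ?_ ?_ ?_ ?_ ?_
  · rintro ⟨A, x⟩ hp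
    rw [Finset.mem_sigma] at hp ⊢
    obtain ⟨hA, hx⟩ := hp
    rw [Finset.mem_powersetCard] at hA
    refine ⟨Finset.mem_powersetCard.2 ⟨fun y hy => Finset.mem_univ y, ?_⟩, ?_⟩
    · rw [Finset.card_erase_of_mem hx, hA.2]
      rfl
    · simp
  · rintro ⟨B, x⟩ hp
    rw [Finset.mem_sigma] at hp ⊢
    obtain ⟨hB, hx⟩ := hp
    rw [Finset.mem_powersetCard] at hB
    have hxB : x ∉ B := by simpa using hx
    refine ⟨Finset.mem_powersetCard.2 ⟨fun y hy => Finset.mem_univ y, ?_⟩, ?_⟩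
    · rw [Finset.card_insert_of_notMem hxB, hB.2]
    · simp [Finset.mem_insert]
  · rintro ⟨A, x⟩ hp
    rw [Finset.mem_sigma] at hp
    simp [Finset.insert_erase hp.2]
  · rintro ⟨B, x⟩ hp
    rw [Finset.mem_sigma] at hp
    have hxB : x ∉ B := by simpa using hp.2
    simp [Finset.erase_insert hxB]
  · rintro ⟨A, x⟩ hp
    rw [Finset.mem_sigma] at hp
    simp [Finset.insert_erase hp.2]

private lemma mgf_bound (N : ℕ) (z : Fin N → ℕ) (hz : ∀ i, z i ≤ 1) :
    ∀ j, j ≤ N → ∀ h : ℝ,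
    ∑ A ∈ powersetCard j (univ : Finset (Fin N)), Real.exp (h * ∑ i ∈ A, (z i : ℝ)) ≤
      (N.choose j : ℝ) * Real.exp (h * j * (∑ i, (z i : ℝ)) / N +
        h ^ 2 * (j * ((N : ℝ) - j + 1)) / (8 * N)) := by
  intro j
  induction j with
  | zero =>
    intro _ h
    simp
  | succ j ih =>
    intro hjN h
    have hj : j ≤ N := Nat.le_of_succ_le hjN
    have hNpos : 0 < (N : ℝ) := by
      have : 0 < N := Nat.lt_of_lt_of_le (Nat.succ_pos j) hjN
      exact_mod_cast this
    have hj0 : (0 : ℝ) ≤ (j : ℝ) := Nat.cast_nonneg j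
    set m : ℝ := ∑ i, (z i : ℝ) with hm
    set R : ℝ := (N : ℝ) - j with hRdef
    have hR1 : 1 ≤ R := by
      have : (j : ℝ) + 1 ≤ N := by exact_mod_cast hjN
      simp only [hRdef]; linarith
    have hRpos : 0 < R := lt_of_lt_of_le one_pos hR1
    have hNR : (N : ℝ) = R + j := by rw [hRdef]; ring
    set h' : ℝ := h * (R - 1) / R with hh'def
    -- step 1 : termwise bound over B
    have step1 : ∀ B ∈ powersetCard j (univ : Finset (Fin N)),
        ∑ x ∈ Bᶜ, Real.exp (h * ∑ i ∈ insert x B, (z i : ℝ)) ≤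
          R * Real.exp (h ^ 2 / 8 + h * m / R) * Real.exp (h' * ∑ i ∈ B, (z i : ℝ)) := by
      intro B hB
      have hBcard : B.card = j := (Finset.mem_powersetCard.1 hB).2
      set SB : ℝ := ∑ i ∈ B, (z i : ℝ) with hSB
      set mB : ℝ := ∑ x ∈ Bᶜ, (z x : ℝ) with hmB
      have hmB0 : 0 ≤ mB := Finset.sum_nonneg fun i _ => by positivity
      have hcard : (Bᶜ.card : ℝ) = R := by
        rw [Finset.card_compl, Fintype.card_fin, hBcard, Nat.cast_sub hj]
      have hmBle : mB ≤ R := by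
        rw [← hcard]
        calc mB ≤ ∑ _x ∈ Bᶜ, (1 : ℝ) := Finset.sum_le_sum fun i _ => by exact_mod_cast hz i
        _ = Bᶜ.card := by simp
      have hsplit : mB = m - SB := by
        have := Finset.sum_add_sum_compl B (fun i => (z i : ℝ))
        simp only [hSB, hmB, hm]; linarith
      have e1 : ∑ x ∈ Bᶜ, Real.exp (h * ∑ i ∈ insert x B, (z i : ℝ)) =
          (∑ x ∈ Bᶜ, Real.exp (h * (z x : ℝ))) * Real.exp (h * SB) := by
        rw [Finset.sum_mul]
        refine Finset.sum_congr rfl fun x hx => ?_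
        have hxB : x ∉ B := Finset.mem_compl.1 hx
        rw [Finset.sum_insert hxB, ← Real.exp_add]
        ring_nf
        rfl
      have e2 : ∑ x ∈ Bᶜ, Real.exp (h * (z x : ℝ)) = (R - mB) + mB * Real.exp h := by
        have hpt : ∀ x ∈ Bᶜ, Real.exp (h * (z x : ℝ)) =
            (1 - (z x : ℝ)) + (z x : ℝ) * Real.exp h := by
          intro x _
          rcases Nat.le_one_iff_eq_zero_or_eq_one.1 (hz x) with hx | hx <;> rw [hx] <;> simp
        rw [Finset.sum_congr rfl hpt, Finset.sum_add_distrib, Finset.sum_sub_distrib,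
          ← Finset.sum_mul]
        simp [hcard, ← hmB]
      have e3 : (R - mB) + mB * Real.exp h ≤ R * Real.exp (h * (mB / R) + h ^ 2 / 8) := by
        have hb := bernoulli_mgf (mB / R) (by positivity)
          (by rw [div_le_one hRpos]; exact hmBle) h
        calc (R - mB) + mB * Real.exp h = R * (1 - mB / R + (mB / R) * Real.exp h) := by
              field_simp
          _ ≤ R * Real.exp ((mB / R) * h + h ^ 2 / 8) :=
              mul_le_mul_of_nonneg_left hb hRpos.le
          _ = R * Real.exp (h * (mB / R) + h ^ 2 / 8) := by ring_nf
      calc ∑ x ∈ Bᶜ, Real.exp (h * ∑ i ∈ insert x B, (z i : ℝ))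
          = (∑ x ∈ Bᶜ, Real.exp (h * (z x : ℝ))) * Real.exp (h * SB) := e1
        _ ≤ R * Real.exp (h * (mB / R) + h ^ 2 / 8) * Real.exp (h * SB) := by
            rw [e2]
            exact mul_le_mul_of_nonneg_right e3 (Real.exp_pos _).le
        _ = R * Real.exp (h ^ 2 / 8 + h * m / R) * Real.exp (h' * SB) := by
            rw [mul_assoc, mul_assoc, ← Real.exp_add, ← Real.exp_add]
            congr 2
            rw [hsplit, hh'def]
            field_simp
            ring
    -- step 2 : sum over B and apply IH
    have key : ((j : ℝ) + 1) * ∑ A ∈ powersetCard (j + 1) (univ : Finset (Fin N)),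
        Real.exp (h * ∑ i ∈ A, (z i : ℝ)) ≤
        R * Real.exp (h ^ 2 / 8 + h * m / R) * ((N.choose j : ℝ) *
          Real.exp (h' * j * m / N + h' ^ 2 * (j * ((N : ℝ) - j + 1)) / (8 * N))) := by
      rw [sum_powersetCard_succ j (fun A => Real.exp (h * ∑ i ∈ A, (z i : ℝ)))]
      calc ∑ B ∈ powersetCard j (univ : Finset (Fin N)), ∑ x ∈ Bᶜ,
            Real.exp (h * ∑ i ∈ insert x B, (z i : ℝ))
          ≤ ∑ B ∈ powersetCard j (univ : Finset (Fin N)),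
            R * Real.exp (h ^ 2 / 8 + h * m / R) * Real.exp (h' * ∑ i ∈ B, (z i : ℝ)) :=
            Finset.sum_le_sum step1
        _ = R * Real.exp (h ^ 2 / 8 + h * m / R) *
            ∑ B ∈ powersetCard j (univ : Finset (Fin N)),
              Real.exp (h' * ∑ i ∈ B, (z i : ℝ)) :=
            (Finset.mul_sum _ _ _).symm
        _ ≤ _ := mul_le_mul_of_nonneg_left (ih hj h') (by positivity)
    -- step 3 : compare the two right-hand sides
    have hchoose : R * (N.choose j : ℝ) = ((j : ℝ) + 1) * (N.choose (j + 1) : ℝ) := by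
      have h2 : (N.choose (j + 1) * (j + 1) : ℕ) = N.choose j * (N - j) :=
        Nat.choose_succ_right_eq N j
      have h3 : (N.choose (j + 1) : ℝ) * ((j : ℝ) + 1) = (N.choose j : ℝ) * ((N - j : ℕ) : ℝ) := by
        exact_mod_cast congrArg (fun t : ℕ => (t : ℝ)) h2
      rw [Nat.cast_sub hj] at h3
      rw [← hRdef] at h3
      linarith
    have hdiff : (h * ((j : ℝ) + 1) * m / N + h ^ 2 * (((j : ℝ) + 1) * R) / (8 * N)) -
        (h ^ 2 / 8 + h * m / R + (h' * j * m / N + h' ^ 2 * (j * ((N : ℝ) - j + 1)) / (8 * N))) =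
        h ^ 2 * ((j : ℝ) * (R - 1)) / (8 * (R + j) * R ^ 2) := by
      rw [hh'def, hNR]
      have : R - 1 + (j:ℝ) + 1 = R + j := by ring
      field_simp
      ring
    have hdiffpos : 0 ≤ h ^ 2 * ((j : ℝ) * (R - 1)) / (8 * (R + j) * R ^ 2) := by
      have : 0 ≤ (j : ℝ) * (R - 1) := mul_nonneg hj0 (by linarith)
      positivity
    have hexp : Real.exp (h ^ 2 / 8 + h * m / R) *
        Real.exp (h' * j * m / N + h' ^ 2 * (j * ((N : ℝ) - j + 1)) / (8 * N)) ≤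
        Real.exp (h * ((j : ℝ) + 1) * m / N + h ^ 2 * (((j : ℝ) + 1) * R) / (8 * N)) := by
      rw [← Real.exp_add]
      exact Real.exp_le_exp.2 (by linarith)
    -- conclude
    refine le_of_mul_le_mul_left ?_ (show (0 : ℝ) < (j : ℝ) + 1 by positivity)
    have hc1 : ((j + 1 : ℕ) : ℝ) = (j : ℝ) + 1 := by push_cast; ring
    have hc2 : (N : ℝ) - ((j + 1 : ℕ) : ℝ) + 1 = R := by rw [hc1, hRdef]; ring
    calc ((j : ℝ) + 1) * ∑ A ∈ powersetCard (j + 1) (univ : Finset (Fin N)),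
          Real.exp (h * ∑ i ∈ A, (z i : ℝ))
        ≤ R * Real.exp (h ^ 2 / 8 + h * m / R) * ((N.choose j : ℝ) *
          Real.exp (h' * j * m / N + h' ^ 2 * (j * ((N : ℝ) - j + 1)) / (8 * N))) := key
      _ = (R * (N.choose j : ℝ)) * (Real.exp (h ^ 2 / 8 + h * m / R) *
          Real.exp (h' * j * m / N + h' ^ 2 * (j * ((N : ℝ) - j + 1)) / (8 * N))) := by ring
      _ ≤ (((j : ℝ) + 1) * (N.choose (j + 1) : ℝ)) *
          Real.exp (h * ((j : ℝ) + 1) * m / N + h ^ 2 * (((j : ℝ) + 1) * R) / (8 * N)) := by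
          rw [hchoose]
          exact mul_le_mul_of_nonneg_left hexp (by positivity)
      _ = ((j : ℝ) + 1) * ((N.choose (j + 1) : ℝ) *
          Real.exp (h * ((j : ℝ) + 1) * m / N +
            h ^ 2 * (((j : ℝ) + 1) * ((N : ℝ) - ((j : ℝ) + 1) + 1)) / (8 * N))) := by
          rw [show (N : ℝ) - ((j : ℝ) + 1) + 1 = R from by rw [hRdef]; ring]
          ring
      _ = ((j : ℝ) + 1) * ((N.choose (j + 1) : ℝ) *
          Real.exp (h * ((j + 1 : ℕ) : ℝ) * m / N +
            h ^ 2 * (((j + 1 : ℕ) : ℝ) * ((N : ℝ) - ((j + 1 : ℕ) : ℝ) + 1)) / (8 * N))) := by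
          norm_num

private lemma chernoff_count (N : ℕ) (z : Fin N → ℕ) (hz : ∀ i, z i ≤ 1) (a : ℕ) (ha : a ≤ N)
    (θ h : ℝ) (hh : 0 ≤ h) :
    (((univ : Finset (Finset (Fin N))).filter
        (fun A => A.card = a ∧ θ ≤ ∑ i ∈ A, (z i : ℝ))).card : ℝ) ≤
      (N.choose a : ℝ) * Real.exp (-(h * θ) + h * a * (∑ i, (z i : ℝ)) / N +
        h ^ 2 * (a * ((N : ℝ) - a + 1)) / (8 * N)) := by
  set F := (univ : Finset (Finset (Fin N))).filter
    (fun A => A.card = a ∧ θ ≤ ∑ i ∈ A, (z i : ℝ)) with hF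
  have hsub : F ⊆ powersetCard a univ := fun A hA =>
    Finset.mem_powersetCard_univ.2 (Finset.mem_filter.1 hA).2.1
  have hmain : (F.card : ℝ) * Real.exp (h * θ) ≤
      (N.choose a : ℝ) * Real.exp (h * a * (∑ i, (z i : ℝ)) / N +
        h ^ 2 * (a * ((N : ℝ) - a + 1)) / (8 * N)) := by
    calc (F.card : ℝ) * Real.exp (h * θ) = ∑ _A ∈ F, Real.exp (h * θ) := by
          rw [Finset.sum_const, nsmul_eq_mul]
      _ ≤ ∑ A ∈ F, Real.exp (h * ∑ i ∈ A, (z i : ℝ)) :=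
          Finset.sum_le_sum fun A hA => Real.exp_le_exp.2
            (mul_le_mul_of_nonneg_left (Finset.mem_filter.1 hA).2.2 hh)
      _ ≤ ∑ A ∈ powersetCard a univ, Real.exp (h * ∑ i ∈ A, (z i : ℝ)) :=
          Finset.sum_le_sum_of_subset_of_nonneg hsub fun _ _ _ => (Real.exp_pos _).le
      _ ≤ _ := mgf_bound N z hz a ha h
  have h2 := mul_le_mul_of_nonneg_right hmain (Real.exp_pos (-(h * θ))).le
  calc (F.card : ℝ) = (F.card : ℝ) * Real.exp (h * θ) * Real.exp (-(h * θ)) := by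
        rw [mul_assoc, ← Real.exp_add]
        simp
    _ ≤ (N.choose a : ℝ) * Real.exp (h * a * (∑ i, (z i : ℝ)) / N +
          h ^ 2 * (a * ((N : ℝ) - a + 1)) / (8 * N)) * Real.exp (-(h * θ)) := h2
    _ = (N.choose a : ℝ) * Real.exp (-(h * θ) + h * a * (∑ i, (z i : ℝ)) / N +
          h ^ 2 * (a * ((N : ℝ) - a + 1)) / (8 * N)) := by
        rw [mul_assoc, ← Real.exp_add]
        ring_nf

private lemma count_bound (n k : ℕ) (z : Fin (n + k) → ℕ) (hz : ∀ i, z i ≤ 1)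
    (δ ν : ℝ) (hδ0 : 0 ≤ δ) (hν0 : 0 ≤ ν) :
    (((univ : Finset (Finset (Fin (n + k)))).filter
        (fun S => S.card = k ∧ (∑ i ∈ S, (z i : ℝ)) ≤ k * δ ∧
          (n : ℝ) * (δ + ν) ≤ ∑ i ∈ Sᶜ, (z i : ℝ))).card : ℝ) ≤
      ((n + k).choose k : ℝ) * Real.exp (-(2 * ν ^ 2 * n * k ^ 2) / ((n + k) * (k + 1))) := by
  have htriv : (((univ : Finset (Finset (Fin (n + k)))).filter
      (fun S => S.card = k ∧ (∑ i ∈ S, (z i : ℝ)) ≤ k * δ ∧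
        (n : ℝ) * (δ + ν) ≤ ∑ i ∈ Sᶜ, (z i : ℝ))).card : ℝ) ≤ ((n + k).choose k : ℝ) := by
    have hsub : ((univ : Finset (Finset (Fin (n + k)))).filter
        (fun S => S.card = k ∧ (∑ i ∈ S, (z i : ℝ)) ≤ k * δ ∧
          (n : ℝ) * (δ + ν) ≤ ∑ i ∈ Sᶜ, (z i : ℝ))) ⊆ powersetCard k univ := fun A hA =>
      Finset.mem_powersetCard_univ.2 (Finset.mem_filter.1 hA).2.1
    have := Finset.card_le_card hsub
    rw [Finset.card_powersetCard, Finset.card_univ, Fintype.card_fin] at this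
    exact_mod_cast this
  rcases Nat.eq_zero_or_pos n with hn | hn
  · subst hn
    simpa using htriv
  rcases Nat.eq_zero_or_pos k with hk | hk
  · subst hk
    simpa using htriv
  rcases eq_or_lt_of_le hν0 with hν | hν
  · rw [← hν] at htriv ⊢
    simpa using htriv
  -- main case
  have hn1 : (1 : ℝ) ≤ n := by exact_mod_cast hn
  have hk1 : (1 : ℝ) ≤ k := by exact_mod_cast hk
  have hNpos : (0 : ℝ) < (n : ℝ) + k := by linarith
  set m : ℝ := ∑ i, (z i : ℝ) with hm
  set θ : ℝ := ((n : ℝ) * m) / ((n : ℝ) + k) + (n : ℝ) * k * ν / ((n : ℝ) + k) with hθ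
  set h : ℝ := 4 * k * ν / (k + 1) with hh
  have hh0 : 0 ≤ h := by positivity
  have hinj : ((univ : Finset (Finset (Fin (n + k)))).filter
      (fun S => S.card = k ∧ (∑ i ∈ S, (z i : ℝ)) ≤ k * δ ∧
        (n : ℝ) * (δ + ν) ≤ ∑ i ∈ Sᶜ, (z i : ℝ))).card ≤
      ((univ : Finset (Finset (Fin (n + k)))).filter
        (fun A => A.card = n ∧ θ ≤ ∑ i ∈ A, (z i : ℝ))).card := by
    apply Finset.card_le_card_of_injOn (fun S => Sᶜ)
    · intro S hS
      rw [Finset.mem_coe, Finset.mem_filter] at hS ⊢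
      obtain ⟨-, hcard, hs, hY⟩ := hS
      refine ⟨Finset.mem_univ _, ?_, ?_⟩
      · rw [Finset.card_compl, Fintype.card_fin, hcard]
        omega
      · have hsum : (∑ i ∈ S, (z i : ℝ)) + ∑ i ∈ Sᶜ, (z i : ℝ) = m :=
          Finset.sum_add_sum_compl S _
        rw [hθ, ← add_div, div_le_iff₀ hNpos]
        nlinarith [mul_le_mul_of_nonneg_left hs (show (0:ℝ) ≤ n by linarith),
          mul_le_mul_of_nonneg_left hY (show (0:ℝ) ≤ k by linarith)]
    · intro S _ T _ hST
      exact compl_injective hST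
  have hchern := chernoff_count (n + k) z hz n (Nat.le_add_right n k) θ h hh0
  have hsymm : ((n + k).choose n : ℝ) = ((n + k).choose k : ℝ) := by
    have h1 : (n + k).choose (n + k - k) = (n + k).choose k :=
      Nat.choose_symm (Nat.le_add_left k n)
    have h2 : n + k - k = n := by omega
    rw [h2] at h1
    exact_mod_cast h1
  have hexp : -(h * θ) + h * n * m / (n + k : ℕ) +
      h ^ 2 * ((n : ℝ) * (((n + k : ℕ) : ℝ) - n + 1)) / (8 * (n + k : ℕ)) =
      -(2 * ν ^ 2 * n * k ^ 2) / ((n + k) * (k + 1)) := by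
    rw [hθ, hh]
    push_cast
    have hk1' : (0:ℝ) < (k : ℝ) + 1 := by linarith
    field_simp
    ring
  calc (((univ : Finset (Finset (Fin (n + k)))).filter
      (fun S => S.card = k ∧ (∑ i ∈ S, (z i : ℝ)) ≤ k * δ ∧
        (n : ℝ) * (δ + ν) ≤ ∑ i ∈ Sᶜ, (z i : ℝ))).card : ℝ)
      ≤ (((univ : Finset (Finset (Fin (n + k)))).filter
        (fun A => A.card = n ∧ θ ≤ ∑ i ∈ A, (z i : ℝ))).card : ℝ) := by exact_mod_cast hinj
    _ ≤ ((n + k).choose n : ℝ) * Real.exp (-(h * θ) + h * n * m / (n + k : ℕ) +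
        h ^ 2 * ((n : ℝ) * (((n + k : ℕ) : ℝ) - n + 1)) / (8 * (n + k : ℕ))) := hchern
    _ = ((n + k).choose k : ℝ) * Real.exp (-(2 * ν ^ 2 * n * k ^ 2) / ((n + k) * (k + 1))) := by
        rw [hsymm, hexp]

/-- Sampling-without-replacement concentration (Tomamichel–Leverrier, Lemma 6):
for arbitrarily correlated binary random variables `Z_1, …, Z_{n+k}` and a
uniformly random subset `S ⊆ [n+k]` of size `k` (independent of the `Z_i`),
the probability that `Σ_{i∈S} Z_i ≤ kδ` while `Σ_{i∉S} Z_i ≥ n(δ+ν)` is at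
most `exp(−2ν²nk²/((n+k)(k+1)))`. -/
theorem sampling_without_replacement
    {Ω : Type*} [MeasurableSpace Ω] (μ : Measure Ω) [IsProbabilityMeasure μ]
    (n k : ℕ) (Z : Fin (n + k) → Ω → ℕ)
    (hZm : ∀ i, Measurable (Z i)) (hZb : ∀ i ω, Z i ω ≤ 1)
    (δ ν : ℝ) (hδ : δ ∈ Set.Icc (0:ℝ) 1) (hν : ν ∈ Set.Icc (0:ℝ) 1) :
    ((Finset.univ.filter (fun S : Finset (Fin (n + k)) => S.card = k)).card : ℝ)⁻¹ *
      ∑ S ∈ Finset.univ.filter (fun S : Finset (Fin (n + k)) => S.card = k),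
        (μ {ω | ((∑ i ∈ S, Z i ω : ℕ) : ℝ) ≤ k * δ ∧
                (n : ℝ) * (δ + ν) ≤ ((∑ i ∈ Sᶜ, Z i ω : ℕ) : ℝ)}).toReal
      ≤ Real.exp (-(2 * ν ^ 2 * n * k ^ 2) / ((n + k) * (k + 1))) := by
  classical
  set E : ℝ := Real.exp (-(2 * ν ^ 2 * n * k ^ 2) / ((n + k) * (k + 1))) with hE
  have hE0 : 0 < E := Real.exp_pos _
  set A : Finset (Fin (n + k)) → Set Ω := fun S =>
    {ω | ((∑ i ∈ S, Z i ω : ℕ) : ℝ) ≤ k * δ ∧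
      (n : ℝ) * (δ + ν) ≤ ((∑ i ∈ Sᶜ, Z i ω : ℕ) : ℝ)} with hA
  set filt : Finset (Finset (Fin (n + k))) :=
    Finset.univ.filter (fun S : Finset (Fin (n + k)) => S.card = k) with hfilt
  have hfilteq : filt = powersetCard k (univ : Finset (Fin (n + k))) := by
    ext S
    simp [hfilt, Finset.mem_powersetCard_univ]
  have hfc : filt.card = (n + k).choose k := by
    rw [hfilteq, Finset.card_powersetCard, Finset.card_univ, Fintype.card_fin]
  have hchoosepos : 0 < (n + k).choose k := Nat.choose_pos (Nat.le_add_left k n)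
  -- measurability
  have hAm : ∀ S : Finset (Fin (n + k)), MeasurableSet (A S) := by
    intro S
    have h1 : Measurable (fun ω => ((∑ i ∈ S, Z i ω, ∑ i ∈ Sᶜ, Z i ω) : ℕ × ℕ)) :=
      (Finset.measurable_sum S fun i _ => hZm i).prodMk
        (Finset.measurable_sum Sᶜ fun i _ => hZm i)
    have h2 : A S = (fun ω => ((∑ i ∈ S, Z i ω, ∑ i ∈ Sᶜ, Z i ω) : ℕ × ℕ)) ⁻¹'
        {p : ℕ × ℕ | ((p.1 : ℝ) ≤ k * δ ∧ (n : ℝ) * (δ + ν) ≤ (p.2 : ℝ))} := rfl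
    rw [h2]
    exact h1 ((Set.to_countable _).measurableSet)
  -- pointwise counting bound
  have hpoint : ∀ ω : Ω, (((filt.filter (fun S => ω ∈ A S)).card : ℝ)) ≤
      ((n + k).choose k : ℝ) * E := by
    intro ω
    have heq : filt.filter (fun S => ω ∈ A S) =
        (univ : Finset (Finset (Fin (n + k)))).filter
          (fun S => S.card = k ∧ (∑ i ∈ S, ((Z i ω : ℕ) : ℝ)) ≤ k * δ ∧
            (n : ℝ) * (δ + ν) ≤ ∑ i ∈ Sᶜ, ((Z i ω : ℕ) : ℝ)) := by
      rw [hfilt, Finset.filter_filter]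
      apply Finset.filter_congr
      intro S _
      simp only [hA, Set.mem_setOf_eq]
      push_cast
      tauto
    rw [heq]
    exact count_bound n k (fun i => Z i ω) (fun i => hZb i ω) δ ν hδ.1 hν.1
  -- sum of measures bound
  have hkey : ∑ S ∈ filt, μ (A S) ≤ ENNReal.ofReal (((n + k).choose k : ℝ) * E) := by
    have h1 : ∑ S ∈ filt, μ (A S) = ∫⁻ ω, ∑ S ∈ filt, (A S).indicator 1 ω ∂μ := by
      rw [lintegral_finset_sum filt (fun S _ => measurable_one.indicator (hAm S))]
      exact Finset.sum_congr rfl fun S _ => (lintegral_indicator_one (hAm S)).symm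
    rw [h1]
    have h2 : ∀ ω, ∑ S ∈ filt, (A S).indicator (1 : Ω → ENNReal) ω ≤
        ENNReal.ofReal (((n + k).choose k : ℝ) * E) := by
      intro ω
      have h3 : ∑ S ∈ filt, (A S).indicator (1 : Ω → ENNReal) ω =
          ((filt.filter (fun S => ω ∈ A S)).card : ENNReal) := by
        rw [← Finset.sum_boole]
        exact Finset.sum_congr rfl fun S _ => by
          simp [Set.indicator_apply]
      rw [h3]
      calc ((filt.filter (fun S => ω ∈ A S)).card : ENNReal)
          = ENNReal.ofReal (((filt.filter (fun S => ω ∈ A S)).card : ℝ)) := by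
            rw [ENNReal.ofReal_natCast]
        _ ≤ ENNReal.ofReal (((n + k).choose k : ℝ) * E) :=
            ENNReal.ofReal_le_ofReal (hpoint ω)
    calc ∫⁻ ω, ∑ S ∈ filt, (A S).indicator 1 ω ∂μ
        ≤ ∫⁻ _ω, ENNReal.ofReal (((n + k).choose k : ℝ) * E) ∂μ := lintegral_mono h2
      _ = ENNReal.ofReal (((n + k).choose k : ℝ) * E) := by
          rw [lintegral_const, measure_univ, mul_one]
  -- conclude
  have hsum : ∑ S ∈ filt, (μ (A S)).toReal = (∑ S ∈ filt, μ (A S)).toReal :=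
    (ENNReal.toReal_sum fun S _ => measure_ne_top μ (A S)).symm
  have hfin : ∑ S ∈ filt, (μ (A S)).toReal ≤ ((n + k).choose k : ℝ) * E := by
    rw [hsum]
    calc (∑ S ∈ filt, μ (A S)).toReal
        ≤ (ENNReal.ofReal (((n + k).choose k : ℝ) * E)).toReal :=
          ENNReal.toReal_mono ENNReal.ofReal_ne_top hkey
      _ = ((n + k).choose k : ℝ) * E := ENNReal.toReal_ofReal (by positivity)
  have hccast : (filt.card : ℝ) = ((n + k).choose k : ℝ) := by exact_mod_cast hfc
  calc (filt.card : ℝ)⁻¹ * ∑ S ∈ filt, (μ (A S)).toReal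
      ≤ (filt.card : ℝ)⁻¹ * (((n + k).choose k : ℝ) * E) := by
        refine mul_le_mul_of_nonneg_left hfin (by positivity)
    _ = E := by
        rw [hccast]
        field_simp
end
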